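/- In any finite-horizon MDP with deterministic transitions and deterministic rewards, any policy that maximizes the expected cumulative reward E[∑_{t=0}^{T-1} r̃_t] also maximizes E[max_{k ∈ {−1,...,T−1}} ∑_{t=0}^{k} r̃_t], provided the agent can choose, at every state, an action with reward 0 that keeps the state unchanged (a 'do nothing' action), and the horizon is fixed. Concretely: for a deterministic environment with a zero-reward self-loop action available at every state, the maximum over policies of the best intermediate cumulative reward equals the maximum over policies of the final cumulative reward. -/
import Mathlib


/-- State at time `t` of a deterministic environment with transition function
`step`, initial state `s0`, under the action sequence `a` (horizon `T`). -/
def detState {S A : Type} (T : ℕ) (step : S → A → S) (s0 : S)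
    (a : Fin T → A) : ℕ → S
  | 0 => s0
  | t + 1 => if h : t < T then step (detState T step s0 a t) (a ⟨t, h⟩)
             else detState T step s0 a t

/-- Reward obtained at time `t` (zero beyond the horizon). -/
def detReward {S A : Type} (T : ℕ) (step : S → A → S) (reward : S → A → ℝ)
    (s0 : S) (a : Fin T → A) (t : ℕ) : ℝ :=
  if h : t < T then reward (detState T step s0 a t) (a ⟨t, h⟩) else 0

/-- In a finite-horizon MDP with deterministic transitions and rewards, if
every state has a zero-reward 'do nothing' action (a self-loop with reward 0),
then the best achievable maximum intermediate cumulative reward (over prefixes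
`k ∈ {−1, …, T−1}`, the empty prefix giving 0) equals the best achievable
final cumulative reward; in particular any policy maximizing the cumulative
reward also maximizes the maximum-prefix-sum objective. In a deterministic
environment, policies are equivalent to action sequences `Fin T → A`. -/
theorem det_max_prefix_eq_det_total {S A : Type} [Fintype A] [Nonempty A]
    (T : ℕ) (step : S → A → S) (reward : S → A → ℝ) (s0 : S)
    (noop : S → A)
    (hstep : ∀ s, step s (noop s) = s) (hrew : ∀ s, reward s (noop s) = 0) :
    (Finset.univ : Finset (Fin T → A)).sup' Finset.univ_nonempty
        (fun a => (Finset.range (T + 1)).sup'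
          (Finset.nonempty_range_iff.mpr (by omega))
          (fun k => ∑ t ∈ Finset.range k, detReward T step reward s0 a t)) =
      (Finset.univ : Finset (Fin T → A)).sup' Finset.univ_nonempty
        (fun a => ∑ t ∈ Finset.range T, detReward T step reward s0 a t) := by
  apply le_antisymm
  · apply Finset.sup'_le
    intro a _
    apply Finset.sup'_le
    intro k hk
    rw [Finset.mem_range] at hk
    have hkT : k ≤ T := by omega
    -- build the modified policy
    set sk := detState T step s0 a k with hsk
    set a' : Fin T → A := fun i => if (i : ℕ) < k then a i else noop sk with ha'
    have hcongr : ∀ t, t ≤ k →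
        detState T step s0 a' t = detState T step s0 a t := by
      intro t ht
      induction t with
      | zero => rfl
      | succ n ih =>
        have hn : n ≤ k := by omega
        simp only [detState]
        rw [ih hn]
        split
        · have : a' ⟨n, ‹n < T›⟩ = a ⟨n, ‹n < T›⟩ := by
            simp [ha']; intro h; omega
          rw [this]
        · rfl
    have hstay : ∀ t, k ≤ t → detState T step s0 a' t = sk := by
      intro t ht
      induction t with
      | zero =>
        have : k = 0 := by omega
        rw [hsk, this]
        rfl
      | succ n ih =>
        rcases Nat.lt_or_ge n k with h | h
        · have : k = n + 1 := by omega
          rw [hcongr _ (le_of_eq this.symm), hsk, this]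
        · simp only [detState]
          rw [ih h]
          split
          · have : a' ⟨n, ‹n < T›⟩ = noop sk := by
              simp [ha']; omega
            rw [this, hstep]
          · rfl
    have hsum : ∑ t ∈ Finset.range T, detReward T step reward s0 a' t
        = ∑ t ∈ Finset.range k, detReward T step reward s0 a t := by
      rw [← Finset.sum_range_add_sum_Ico _ hkT]
      have h1 : ∀ t ∈ Finset.range k,
          detReward T step reward s0 a' t = detReward T step reward s0 a t := by
        intro t ht
        rw [Finset.mem_range] at ht
        unfold detReward
        split
        · rw [hcongr t (le_of_lt ht)]
          congr 2
          simp [ha', ht]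
        · rfl
      have h2 : ∀ t ∈ Finset.Ico k T,
          detReward T step reward s0 a' t = 0 := by
        intro t ht
        rw [Finset.mem_Ico] at ht
        unfold detReward
        rw [dif_pos ht.2]
        have : a' ⟨t, ht.2⟩ = noop sk := by
          simp [ha']; omega
        rw [hstay t ht.1, this, hrew]
      rw [Finset.sum_congr rfl h1, Finset.sum_eq_zero h2, add_zero]
    calc ∑ t ∈ Finset.range k, detReward T step reward s0 a t
        = ∑ t ∈ Finset.range T, detReward T step reward s0 a' t := hsum.symm
      _ ≤ _ := Finset.le_sup' (fun b => ∑ t ∈ Finset.range T, detReward T step reward s0 b t) (Finset.mem_univ a')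
  · apply Finset.sup'_le
    intro a _
    refine le_trans ?_ (Finset.le_sup' _ (Finset.mem_univ a))
    exact Finset.le_sup' (f := fun k => ∑ t ∈ Finset.range k,
      detReward T step reward s0 a t) (Finset.self_mem_range_succ T)
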